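/- For every n ≥ 1 and every Boolean function f : {0,1}^n → {0,1}, setting k = 2^n − 1, there exist subsets S_1, …, S_k of {0,…,n−1} and real numbers θ_1,…,θ_k and φ_1,…,φ_k such that for every x ∈ {0,1}^n, ⟨v, (⊗_{i=1}^k M_i(x)) v⟩ = (−1)^{f(x)}, where M_i(x) = cos(θ_i + φ_i·χ_{S_i}(x))·σx + sin(θ_i + φ_i·χ_{S_i}(x))·σy and v is the k-qubit GHZ state. In other words, any n-bit Boolean function can be evaluated deterministically by non-adaptive single-qubit equatorial measurements, selected via parity functions of the input, on a (2^n − 1)-qubit GHZ state. -/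
import Mathlib


open scoped BigOperators

/-- The Pauli X matrix. -/
noncomputable def sigmaX : Matrix (Fin 2) (Fin 2) ℂ := !![0, 1; 1, 0]

/-- The Pauli Y matrix. -/
noncomputable def sigmaY : Matrix (Fin 2) (Fin 2) ℂ := !![0, -Complex.I; Complex.I, 0]

/-- Equatorial single-qubit measurement operator with angle `α`. -/
noncomputable def Meq (α : ℝ) : Matrix (Fin 2) (Fin 2) ℂ :=
  (Real.cos α : ℂ) • sigmaX + (Real.sin α : ℂ) • sigmaY

/-- Tensor product of `k` single-qubit operators. -/
noncomputable def tensorOp {k : ℕ} (M : Fin k → Matrix (Fin 2) (Fin 2) ℂ) :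
    Matrix (Fin k → Fin 2) (Fin k → Fin 2) ℂ :=
  fun a b => ∏ i, M i (a i) (b i)

/-- The `k`-qubit GHZ state. -/
noncomputable def ghz (k : ℕ) : (Fin k → Fin 2) → ℂ :=
  fun a => if (∀ i, a i = 0) ∨ (∀ i, a i = 1) then ((Real.sqrt 2 : ℝ) : ℂ)⁻¹ else 0

/-- Standard Hermitian inner product, conjugate linear in the first argument. -/
noncomputable def inprod {ι : Type} [Fintype ι] (v w : ι → ℂ) : ℂ :=
  ∑ a, (starRingEnd ℂ) (v a) * w a

/-- The parity `χ_S(x) = ⊕_{i ∈ S} x_i ∈ {0,1}`. -/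
def chi {n : ℕ} (S : Finset (Fin n)) (x : Fin n → Bool) : ℕ :=
  (∑ i ∈ S, if x i then 1 else 0) % 2

/- ### Auxiliary lemmas -/

lemma Meq00 (α : ℝ) : Meq α 0 0 = 0 := by simp [Meq, sigmaX, sigmaY]
lemma Meq11 (α : ℝ) : Meq α 1 1 = 0 := by simp [Meq, sigmaX, sigmaY]
lemma Meq01 (α : ℝ) : Meq α 0 1 = Complex.exp (-(α : ℂ) * Complex.I) := by
  have h : Complex.exp (-(α : ℂ) * Complex.I)
      = Complex.cos (-(α:ℂ)) + Complex.sin (-(α:ℂ)) * Complex.I := Complex.exp_mul_I _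
  rw [h, Complex.cos_neg, Complex.sin_neg]
  simp [Meq, sigmaX, sigmaY]
lemma Meq10 (α : ℝ) : Meq α 1 0 = Complex.exp ((α : ℂ) * Complex.I) := by
  rw [Complex.exp_mul_I]
  simp [Meq, sigmaX, sigmaY]

lemma sum_pair_support {ι : Type} [Fintype ι] [DecidableEq ι] (a0 a1 : ι) (h : a0 ≠ a1)
    (F : ι → ℂ) (hF : ∀ a, a ≠ a0 → a ≠ a1 → F a = 0) : ∑ a, F a = F a0 + F a1 := by
  rw [← Finset.sum_pair h]
  refine (Finset.sum_subset (Finset.subset_univ _) ?_).symm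
  intro x _ hx
  simp only [Finset.mem_insert, Finset.mem_singleton, not_or] at hx
  exact hF x hx.1 hx.2

/-- The GHZ correlation: the expectation of a tensor product of equatorial measurement
operators on the GHZ state is the cosine of the sum of the angles. -/
lemma ghz_inner (k : ℕ) (hk : 0 < k) (α : Fin k → ℝ) :
    inprod (ghz k) ((tensorOp fun i => Meq (α i)).mulVec (ghz k))
      = ((Real.cos (∑ i, α i) : ℝ) : ℂ) := by
  classical
  set c : ℂ := ((Real.sqrt 2 : ℝ) : ℂ)⁻¹ with hc
  set a0 : Fin k → Fin 2 := fun _ => 0 with ha0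
  set a1 : Fin k → Fin 2 := fun _ => 1 with ha1
  have hne : a0 ≠ a1 := by
    intro h
    have := congrFun h ⟨0, hk⟩
    simp [ha0, ha1] at this
  have hghz : ∀ a, ghz k a = if a = a0 ∨ a = a1 then c else 0 := by
    intro a
    have : ((∀ i, a i = 0) ∨ (∀ i, a i = 1)) ↔ (a = a0 ∨ a = a1) := by
      simp [funext_iff, ha0, ha1]
    simp only [ghz, this, hc]
  have hghz0 : ∀ a, a ≠ a0 → a ≠ a1 → ghz k a = 0 := by
    intro a h0 h1; rw [hghz]; simp [h0, h1]
  have hghza0 : ghz k a0 = c := by rw [hghz]; simp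
  have hghza1 : ghz k a1 = c := by rw [hghz]; simp
  set M : Fin k → Matrix (Fin 2) (Fin 2) ℂ := fun i => Meq (α i) with hM
  have hmv : ∀ a, (tensorOp M).mulVec (ghz k) a
      = tensorOp M a a0 * c + tensorOp M a a1 * c := by
    intro a
    have : (tensorOp M).mulVec (ghz k) a = ∑ b, tensorOp M a b * ghz k b := by
      simp [Matrix.mulVec, dotProduct]
    rw [this, sum_pair_support a0 a1 hne _ (fun b h0 h1 => by rw [hghz0 b h0 h1, mul_zero]),
      hghza0, hghza1]
  have t00 : tensorOp M a0 a0 = 0 := by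
    refine Finset.prod_eq_zero (Finset.mem_univ (⟨0, hk⟩ : Fin k)) ?_
    simp [hM, ha0, Meq00]
  have t11 : tensorOp M a1 a1 = 0 := by
    refine Finset.prod_eq_zero (Finset.mem_univ (⟨0, hk⟩ : Fin k)) ?_
    simp [hM, ha1, Meq11]
  have t01 : tensorOp M a0 a1 = Complex.exp (-(∑ i, α i : ℝ) * Complex.I) := by
    unfold tensorOp
    simp only [hM, ha0, ha1, Meq01]
    rw [← Complex.exp_sum]
    congr 1
    push_cast
    simp [neg_mul, Finset.sum_neg_distrib, Finset.sum_mul]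
  have t10 : tensorOp M a1 a0 = Complex.exp ((∑ i, α i : ℝ) * Complex.I) := by
    unfold tensorOp
    simp only [hM, ha1, ha0, Meq10]
    rw [← Complex.exp_sum]
    congr 1
    push_cast
    rw [Finset.sum_mul]
  have hcc : (starRingEnd ℂ) c = c := by
    simp [hc, ← Complex.ofReal_inv]
  have hc2 : c * c = 2⁻¹ := by
    rw [hc, ← mul_inv, ← Complex.ofReal_mul, Real.mul_self_sqrt (by norm_num)]
    norm_num
  have hmain : inprod (ghz k) ((tensorOp M).mulVec (ghz k))
      = (starRingEnd ℂ) (ghz k a0) * ((tensorOp M).mulVec (ghz k) a0)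
        + (starRingEnd ℂ) (ghz k a1) * ((tensorOp M).mulVec (ghz k) a1) := by
    unfold inprod
    exact sum_pair_support a0 a1 hne _ (fun a h0 h1 => by rw [hghz0 a h0 h1]; simp)
  rw [hmain, hghza0, hghza1, hmv, hmv, t00, t11, t01, t10, hcc]
  rw [Complex.ofReal_cos, Complex.cos]
  linear_combination (Complex.exp (-(∑ i, α i : ℝ) * Complex.I)
    + Complex.exp ((∑ i, α i : ℝ) * Complex.I)) * hc2

/-- The Fourier character `(-1)^{χ_S(x)}` as a real number. -/
noncomputable def ee {n : ℕ} (S : Finset (Fin n)) (x : Fin n → Bool) : ℝ :=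
  ∏ i ∈ S, (if x i then (-1 : ℝ) else 1)

lemma ee_eq {n : ℕ} (S : Finset (Fin n)) (x : Fin n → Bool) :
    ee S x = 1 - 2 * (chi S x : ℝ) := by
  have h1 : ee S x = (-1 : ℝ) ^ (∑ i ∈ S, if x i then (1:ℕ) else 0) := by
    rw [← Finset.prod_pow_eq_pow_sum]
    exact Finset.prod_congr rfl fun i _ => by by_cases h : x i <;> simp [ee, h]
  rw [h1, chi]
  rcases Nat.mod_two_eq_zero_or_one (∑ i ∈ S, if x i then (1:ℕ) else 0) with h | h
  · rw [(Nat.even_iff.2 h).neg_one_pow, h]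
    norm_num
  · rw [(Nat.odd_iff.2 h).neg_one_pow, h]
    norm_num

lemma ortho {n : ℕ} (x y : Fin n → Bool) :
    ∑ S : Finset (Fin n), ee S x * ee S y = if x = y then (2:ℝ)^n else 0 := by
  have h1 : ∀ S : Finset (Fin n), ee S x * ee S y
      = (∏ i ∈ S, (if x i = y i then (1:ℝ) else -1)) * ∏ i ∈ Sᶜ, (1:ℝ) := by
    intro S
    rw [Finset.prod_const_one, mul_one, ee, ee, ← Finset.prod_mul_distrib]
    exact Finset.prod_congr rfl fun i _ => by
      by_cases hx : x i <;> by_cases hy : y i <;> simp [hx, hy]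
  rw [Finset.sum_congr rfl fun S _ => h1 S, ← Fintype.prod_add]
  by_cases hxy : x = y
  · subst hxy
    simp [Finset.prod_const]
    norm_num
  · rw [if_neg hxy]
    obtain ⟨j, hj⟩ : ∃ j, x j ≠ y j := by
      by_contra h
      push_neg at h
      exact hxy (funext h)
    exact Finset.prod_eq_zero (Finset.mem_univ j) (by simp [hj])

/-- Fourier inversion over the Boolean cube. -/
lemma fourier_inv {n : ℕ} (F : (Fin n → Bool) → ℝ) (x : Fin n → Bool) :
    ∑ S : Finset (Fin n), (((2:ℝ)^n)⁻¹ * ∑ y, F y * ee S y) * ee S x = F x := by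
  have h1 : ∀ S : Finset (Fin n), (((2:ℝ)^n)⁻¹ * ∑ y, F y * ee S y) * ee S x
      = ((2:ℝ)^n)⁻¹ * ∑ y, F y * (ee S y * ee S x) := by
    intro S
    rw [mul_assoc, Finset.sum_mul]
    congr 1
    exact Finset.sum_congr rfl fun y _ => by ring
  rw [Finset.sum_congr rfl fun S _ => h1 S, ← Finset.mul_sum, Finset.sum_comm]
  have h2 : ∀ y, ∑ S : Finset (Fin n), F y * (ee S y * ee S x)
      = F y * (if y = x then (2:ℝ)^n else 0) := by
    intro y
    rw [← Finset.mul_sum, ortho y x]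
  rw [Finset.sum_congr rfl fun y _ => h2 y]
  simp only [mul_ite, mul_zero, Finset.sum_ite_eq', Finset.mem_univ, if_true]
  field_simp

/-- Any `n`-bit Boolean function can be evaluated deterministically by non-adaptive
single-qubit equatorial measurements, selected via parity functions of the input, on a
`(2^n − 1)`-qubit GHZ state. -/
theorem nmqc_universality (n : ℕ) (hn : 1 ≤ n) (f : (Fin n → Bool) → Bool) :
    ∃ (S : Fin (2 ^ n - 1) → Finset (Fin n)) (θ φ : Fin (2 ^ n - 1) → ℝ),
      ∀ x : Fin n → Bool,
        inprod (ghz (2 ^ n - 1))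
          ((tensorOp fun i => Meq (θ i + φ i * (chi (S i) x : ℝ))).mulVec (ghz (2 ^ n - 1)))
          = (if f x then (-1 : ℂ) else 1) := by
  classical
  have hk : 0 < 2^n - 1 := by
    have h2 : (2:ℕ) ≤ 2^n := by
      calc (2:ℕ) = 2^1 := rfl
      _ ≤ 2^n := Nat.pow_le_pow_right (by norm_num) hn
    omega
  have hcard : Fintype.card {S : Finset (Fin n) // S ≠ ∅} = 2^n - 1 := by
    have h := Fintype.card_subtype_compl (fun S : Finset (Fin n) => S = ∅)
    simpa [Fintype.card_finset] using h
  let E : Fin (2^n-1) ≃ {S : Finset (Fin n) // S ≠ ∅} := (Fintype.equivFinOfCardEq hcard).symm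
  let F : (Fin n → Bool) → ℝ := fun y => if f y then 1 else 0
  let c : Finset (Fin n) → ℝ := fun S => ((2:ℝ)^n)⁻¹ * ∑ y, F y * ee S y
  let A : ℝ := ∑ S : Finset (Fin n), c S
  have hT : ∀ x, A - 2 * (∑ S : Finset (Fin n), c S * (chi S x : ℝ)) = F x := by
    intro x
    have e1 : ∑ S : Finset (Fin n), c S * ee S x = F x := fourier_inv F x
    have e0 : ∀ S : Finset (Fin n), c S * ee S x = c S - 2 * (c S * (chi S x : ℝ)) :=
      fun S => by rw [ee_eq]; ring
    rw [← e1, Finset.sum_congr rfl fun S _ => e0 S, Finset.sum_sub_distrib]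
    congr 1
    exact Finset.mul_sum _ _ _
  have hsum : ∀ x, ∑ i : Fin (2^n-1),
      (Real.pi * A / ((2^n-1 : ℕ) : ℝ) + (-2*Real.pi*c (E i).1) * (chi (E i).1 x : ℝ))
      = Real.pi * F x := by
    intro x
    rw [Finset.sum_add_distrib, Finset.sum_const, Finset.card_univ, Fintype.card_fin]
    have hk' : ((2^n - 1 : ℕ) : ℝ) ≠ 0 := Nat.cast_ne_zero.2 hk.ne'
    have h1 : (2^n-1 : ℕ) • (Real.pi * A / ((2^n-1:ℕ) : ℝ)) = Real.pi * A := by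
      rw [nsmul_eq_mul, mul_comm]; exact div_mul_cancel₀ _ hk'
    have e2 : ∑ i : Fin (2^n-1), c (E i).1 * (chi (E i).1 x : ℝ)
        = ∑ S : {S : Finset (Fin n) // S ≠ ∅}, c S.1 * (chi S.1 x : ℝ) :=
      Fintype.sum_equiv E _ _ (fun i => rfl)
    have e3 : ∑ S : {S : Finset (Fin n) // S ≠ ∅}, c S.1 * (chi S.1 x : ℝ)
        = ∑ S ∈ Finset.univ.filter (fun S : Finset (Fin n) => S ≠ ∅), c S * (chi S x : ℝ) :=
      by
        have hmem : ∀ S : Finset (Fin n),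
            S ∈ Finset.univ.filter (fun S : Finset (Fin n) => S ≠ ∅) ↔ S ≠ ∅ := fun S => by simp
        exact (Finset.sum_subtype _ hmem (fun S => c S * (chi S x : ℝ))).symm
    have e4 : ∑ S ∈ Finset.univ.filter (fun S : Finset (Fin n) => S ≠ ∅), c S * (chi S x : ℝ)
        = ∑ S : Finset (Fin n), c S * (chi S x : ℝ) := by
      refine Finset.sum_filter_of_ne ?_
      intro S _ hne hS
      apply hne
      subst hS
      simp [chi]
    have h2 : ∑ i : Fin (2^n-1), (-2*Real.pi*c (E i).1) * (chi (E i).1 x : ℝ)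
        = -2*Real.pi * ∑ S : Finset (Fin n), c S * (chi S x : ℝ) := by
      rw [← e4, ← e3, ← e2, Finset.mul_sum]
      exact Finset.sum_congr rfl fun i _ => by ring
    rw [h1, h2]
    linear_combination Real.pi * hT x
  refine ⟨fun i => (E i).1, fun _ => Real.pi * A / ((2^n-1 : ℕ) : ℝ),
    fun i => -2*Real.pi*c (E i).1, fun x => ?_⟩
  rw [ghz_inner _ hk, hsum x]
  by_cases hf : f x
  · simp [F, hf]
  · simp [F, hf]
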